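/- Let H be a complex Hilbert space and A : H →L[ℂ] H a bounded self-adjoint operator whose spectrum is contained in [c, ∞) for some c > 0. For s ∈ ℝ let K s be the operator obtained by applying the continuous functional calculus for A to the continuous function x ↦ exp(−i·s·√x)/(2√x) on [c,∞). For continuous compactly supported f₁, f₂ : ℝ → H define λ₂(f₁, f₂) := ∫∫ ⟪f₁ t, (K (t − t′)) (f₂ t′)⟫ dt′ dt (inner product conjugate-linear in the first slot, Bochner integrals). Then for every continuous compactly supported f : ℝ → H, the complex number λ₂(f, f) has zero imaginary part and nonnegative real part. -/

import Mathlib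

open scoped InnerProductSpace
open MeasureTheory

noncomputable def gsKer (t : ℝ) : ℂ → ℂ := fun z =>
  Complex.exp (Complex.I * (t : ℂ) * (Real.sqrt z.re : ℂ)) *
    ((Real.sqrt (2 * Real.sqrt z.re) : ℝ) : ℂ)⁻¹

lemma gsKer_star (t : ℝ) (z : ℂ) :
    star (gsKer t z) = Complex.exp (-(Complex.I * (t : ℂ) * (Real.sqrt z.re : ℂ))) *
      ((Real.sqrt (2 * Real.sqrt z.re) : ℝ) : ℂ)⁻¹ := by
  simp only [gsKer, star_mul', Complex.star_def, ← Complex.exp_conj, map_mul, map_inv₀,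
    Complex.conj_I, Complex.conj_ofReal, neg_mul]

lemma gsKer_mul {t t' : ℝ} {z : ℂ} (hz : 0 < z.re) :
    star (gsKer t z) * gsKer t' z =
      Complex.exp (-(Complex.I * ((t - t' : ℝ) : ℂ) * (Real.sqrt z.re : ℂ)))
        / (2 * (Real.sqrt z.re : ℂ)) := by
  have hr : (0:ℝ) < Real.sqrt z.re := Real.sqrt_pos.mpr hz
  have hq : Real.sqrt (2 * Real.sqrt z.re) * Real.sqrt (2 * Real.sqrt z.re)
      = 2 * Real.sqrt z.re := Real.mul_self_sqrt (by positivity)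
  rw [gsKer_star, gsKer]
  rw [mul_mul_mul_comm, ← Complex.exp_add, ← mul_inv]
  rw [div_eq_mul_inv]
  congr 1
  · congr 1
    push_cast
    ring
  · congr 1
    exact_mod_cast congrArg Complex.ofReal hq

lemma gsKer_continuousOn (t : ℝ) : ContinuousOn (gsKer t) {z : ℂ | 0 < z.re} := by
  apply ContinuousOn.mul
  · apply Continuous.continuousOn
    fun_prop
  · apply ContinuousOn.inv₀
    · apply Continuous.continuousOn
      fun_prop
    · intro z hz
      have hr : (0:ℝ) < Real.sqrt z.re := Real.sqrt_pos.mpr hz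
      have : (0:ℝ) < Real.sqrt (2 * Real.sqrt z.re) := Real.sqrt_pos.mpr (by positivity)
      exact_mod_cast this.ne'

/-- Positivity of the ground-state two-point function: for a bounded self-adjoint
operator `A` with spectrum in `[c, ∞)`, `c > 0`, and kernel
`K s = e^{−i s √A}/(2√A)` given by the continuous functional calculus, the pairing
`λ₂(f, f) = ∫∫ ⟪f t, K(t−t′) f t′⟫ dt′ dt` is real and nonnegative. -/
theorem ground_state_two_point_positive {H : Type*} [NormedAddCommGroup H]
    [InnerProductSpace ℂ H] [CompleteSpace H]
    (A : H →L[ℂ] H) (hA : IsSelfAdjoint A) (c : ℝ) (hc : 0 < c)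
    (hspec : spectrum ℝ A ⊆ Set.Ici c)
    (K : ℝ → H →L[ℂ] H)
    (hK : ∀ s : ℝ, K s = cfc (fun z : ℂ =>
      Complex.exp (-(Complex.I * (s : ℂ) * (Real.sqrt z.re : ℂ)))
        / (2 * (Real.sqrt z.re : ℂ))) A)
    (f : ℝ → H) (hf : Continuous f) (hfc : HasCompactSupport f) :
    (∫ t : ℝ, ∫ t' : ℝ, ⟪f t, (K (t - t')) (f t')⟫_ℂ).im = 0 ∧
      0 ≤ (∫ t : ℝ, ∫ t' : ℝ, ⟪f t, (K (t - t')) (f t')⟫_ℂ).re := by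
  have hAn : IsStarNormal A := hA.isStarNormal
  -- spectrum facts
  have hSre : ∀ z ∈ spectrum ℂ A, c ≤ z.re := fun z hz =>
    hspec (hA.spectrumRestricts.apply_mem hz)
  have hSpos : spectrum ℂ A ⊆ {z : ℂ | 0 < z.re} :=
    fun z hz => lt_of_lt_of_le hc (hSre z hz)
  have hbS : ∀ t : ℝ, ContinuousOn (gsKer t) (spectrum ℂ A) :=
    fun t => (gsKer_continuousOn t).mono hSpos
  have hbSstar : ∀ t : ℝ, ContinuousOn (fun z => star (gsKer t z)) (spectrum ℂ A) :=
    fun t => (continuous_star.comp_continuousOn (hbS t))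
  -- the square-root operators
  set B : ℝ → H →L[ℂ] H := fun t => cfc (gsKer t) A with hB
  have key : ∀ t t' : ℝ, K (t - t') = star (B t) * B t' := by
    intro t t'
    rw [hB, ← cfc_star (gsKer t) A, ← cfc_mul _ _ A (hbSstar t) (hbS t'), hK]
    exact cfc_congr fun z hz => (gsKer_mul (hSpos hz)).symm
  -- continuity of `t ↦ B t`
  have hScompact : CompactSpace (spectrum ℂ A) :=
    isCompact_iff_compactSpace.mp (spectrum.isCompact A)
  have hΦ : Continuous fun p : ℝ × spectrum ℂ A => gsKer p.1 (p.2 : ℂ) := by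
    unfold gsKer
    apply Continuous.mul
    · fun_prop
    · apply Continuous.inv₀
      · fun_prop
      · rintro ⟨t, z⟩
        have hzre : 0 < (z : ℂ).re := hSpos z.2
        have h0 : (0:ℝ) < Real.sqrt (z : ℂ).re := Real.sqrt_pos.mpr hzre
        have : (0:ℝ) < Real.sqrt (2 * Real.sqrt (z : ℂ).re) :=
          Real.sqrt_pos.mpr (by positivity)
        exact_mod_cast this.ne'
  have hrep : ∀ t : ℝ, B t = cfcHom hAn
      (ContinuousMap.curry ⟨_, hΦ⟩ t) := by
    intro t
    show cfc (gsKer t) A = _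
    rw [cfc_apply (gsKer t) A hAn (hbS t)]
    exact congrArg _ (ContinuousMap.ext fun z => rfl)
  have hBcont : Continuous B := by
    rw [show B = fun t => cfcHom hAn (ContinuousMap.curry ⟨_, hΦ⟩ t) from funext hrep]
    exact (cfcHom_continuous hAn).comp
      (ContinuousMap.curry (⟨_, hΦ⟩ : C(ℝ × spectrum ℂ A, ℂ))).continuous
  -- the vector-valued integrand
  set F : ℝ → H := fun t => B t (f t) with hF
  have hFcont : Continuous F := hBcont.clm_apply hf
  have hFsupp : Function.support F ⊆ Function.support f := fun t ht => by
    by_contra h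
    exact ht (by simp [hF, Function.notMem_support.mp h])
  have hFc : HasCompactSupport F := hfc.mono hFsupp
  have hFint : Integrable F := hFcont.integrable_of_hasCompactSupport hFc
  have hpt : ∀ t t' : ℝ, ⟪f t, (K (t - t')) (f t')⟫_ℂ = ⟪F t, F t'⟫_ℂ := by
    intro t t'
    rw [key t t', ContinuousLinearMap.mul_apply, ContinuousLinearMap.star_eq_adjoint,
      ContinuousLinearMap.adjoint_inner_right]
  set v : H := ∫ t, F t with hv
  have h1 : (∫ t : ℝ, ∫ t' : ℝ, ⟪f t, (K (t - t')) (f t')⟫_ℂ) = starRingEnd ℂ ⟪v, v⟫_ℂ := by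
    calc ∫ t : ℝ, ∫ t' : ℝ, ⟪f t, (K (t - t')) (f t')⟫_ℂ
        = ∫ t : ℝ, ⟪F t, v⟫_ℂ := by
          refine integral_congr_ae (Filter.Eventually.of_forall fun t => ?_)
          simp_rw [hpt]
          exact integral_inner hFint (F t)
      _ = ∫ t : ℝ, starRingEnd ℂ ⟪v, F t⟫_ℂ := by simp_rw [inner_conj_symm]
      _ = starRingEnd ℂ (∫ t : ℝ, ⟪v, F t⟫_ℂ) := integral_conj
      _ = starRingEnd ℂ ⟪v, v⟫_ℂ := by rw [integral_inner hFint v]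
  rw [h1]
  have h2 : ⟪v, v⟫_ℂ = ((‖v‖ ^ 2 : ℝ) : ℂ) := by
    rw [inner_self_eq_norm_sq_to_K]
    norm_num
  constructor
  · rw [h2, Complex.conj_ofReal, Complex.ofReal_im]
  · rw [h2, Complex.conj_ofReal, Complex.ofReal_re]
    positivity
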